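/- Under the hypotheses of the previous statement (k∈C¹ positive, non-integrable, k(t)→0, with the uniform asymptotic conditions on k and k' over bounded windows), with k₀(t)=k(t)sin(t), one has lim_{t→∞}( (∫_t^∞ k₀(s)ds)/k(t) − cos(t) ) = 0; in particular limsup_{t→∞}|∫_t^∞ k₀(s)ds|/k(t)=1 and liminf_{t→∞}|∫_t^∞ k₀(s)ds|/k(t)=0. -/

import Mathlib

open Real Filter MeasureTheory Set Topology

open intervalIntegral

section Aux
variable {k k' : ℝ → ℝ}

lemma uIcc_subset_Ioi' {a b : ℝ} (ha : 0 < a) (hb : 0 < b) : uIcc a b ⊆ Ioi 0 :=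
  fun x hx => lt_of_lt_of_le (lt_min ha hb) hx.1

lemma kcont (hkd : ∀ t > 0, HasDerivAt k (k' t) t) : ContinuousOn k (Ioi 0) :=
  fun x hx => (hkd x hx).continuousAt.continuousWithinAt

lemma intksin (hkd : ∀ t > 0, HasDerivAt k (k' t) t) {a b : ℝ} (ha : 0 < a) (hb : 0 < b) :
    IntervalIntegrable (fun s => k s * Real.sin s) volume a b :=
  (((kcont hkd).mono (uIcc_subset_Ioi' ha hb)).mul
    (Real.continuous_sin.continuousOn)).intervalIntegrable

lemma intk'cos (hk'c : ContinuousOn k' (Ioi 0)) {a b : ℝ} (ha : 0 < a) (hb : 0 < b) :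
    IntervalIntegrable (fun s => k' s * Real.cos s) volume a b :=
  ((hk'c.mono (uIcc_subset_Ioi' ha hb)).mul
    (Real.continuous_cos.continuousOn)).intervalIntegrable

lemma ftc_k (hkd : ∀ t > 0, HasDerivAt k (k' t) t) (hk'c : ContinuousOn k' (Ioi 0))
    {a b : ℝ} (ha : 0 < a) (hb : 0 < b) : ∫ s in a..b, k' s = k b - k a := by
  apply integral_eq_sub_of_hasDerivAt
  · exact fun x hx => hkd x (uIcc_subset_Ioi' ha hb hx)
  · exact (hk'c.mono (uIcc_subset_Ioi' ha hb)).intervalIntegrable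

lemma ibp (hkd : ∀ t > 0, HasDerivAt k (k' t) t) (hk'c : ContinuousOn k' (Ioi 0))
    {a b : ℝ} (ha : 0 < a) (hb : 0 < b) :
    ∫ s in a..b, k s * Real.sin s
      = (k a * Real.cos a - k b * Real.cos b) + ∫ s in a..b, k' s * Real.cos s := by
  have hsub : uIcc a b ⊆ Ioi 0 := uIcc_subset_Ioi' ha hb
  have hderiv : ∀ x ∈ uIcc a b,
      HasDerivAt (fun s => -(k s * Real.cos s)) (k x * Real.sin x - k' x * Real.cos x) x := by
    intro x hx
    have h1 := ((hkd x (hsub hx)).mul (Real.hasDerivAt_cos x)).neg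
    have h2 : k x * Real.sin x - k' x * Real.cos x
        = -(k' x * Real.cos x + k x * -Real.sin x) := by ring
    rw [h2]; exact h1
  have hint1 := intksin hkd ha hb
  have hint2 := intk'cos hk'c ha hb
  have h := integral_eq_sub_of_hasDerivAt hderiv (hint1.sub hint2)
  rw [integral_sub hint1 hint2] at h
  linarith [h]

lemma tail_limit (hkd : ∀ t > 0, HasDerivAt k (k' t) t) (hk'c : ContinuousOn k' (Ioi 0))
    (hk0 : Tendsto k atTop (𝓝 0)) {L : ℝ}
    (hL : Tendsto (fun t => ∫ s in (1:ℝ)..t, k s * Real.sin s) atTop (𝓝 L))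
    {t : ℝ} (ht : 1 ≤ t) :
    Tendsto (fun T => ∫ s in t..T, k' s * Real.cos s) atTop
      (𝓝 ((L - ∫ s in (1:ℝ)..t, k s * Real.sin s) - k t * Real.cos t)) := by
  have ht0 : (0:ℝ) < t := lt_of_lt_of_le one_pos ht
  have hcos0 : Tendsto (fun T => k T * Real.cos T) atTop (𝓝 0) := by
    apply squeeze_zero_norm' (a := fun T => |k T|)
    · filter_upwards with T
      rw [Real.norm_eq_abs, abs_mul]
      exact mul_le_of_le_one_right (abs_nonneg _) (Real.abs_cos_le_one T)
    · simpa using hk0.abs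
  have hrhs : Tendsto (fun T => ((∫ s in (1:ℝ)..T, k s * Real.sin s)
      - (∫ s in (1:ℝ)..t, k s * Real.sin s) - k t * Real.cos t) + k T * Real.cos T) atTop
      (𝓝 ((L - ∫ s in (1:ℝ)..t, k s * Real.sin s) - k t * Real.cos t)) := by
    have := ((hL.sub_const (∫ s in (1:ℝ)..t, k s * Real.sin s)).sub_const
      (k t * Real.cos t)).add hcos0
    simpa using this
  apply hrhs.congr'
  filter_upwards [eventually_ge_atTop t] with T hT
  have hT0 : (0:ℝ) < T := lt_of_lt_of_le ht0 hT
  have h1 := ibp hkd hk'c ht0 hT0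
  have h2 : (∫ s in (1:ℝ)..t, k s * Real.sin s) + ∫ s in t..T, k s * Real.sin s
      = ∫ s in (1:ℝ)..T, k s * Real.sin s :=
    integral_add_adjacent_intervals (intksin hkd one_pos ht0) (intksin hkd ht0 hT0)
  linarith

end Aux
lemma sign_k' (k k' : ℝ → ℝ)
    (hkpos : ∀ t > 0, 0 < k t)
    (hkd : ∀ t > 0, HasDerivAt k (k' t) t)
    (hk'c : ContinuousOn k' (Ioi 0))
    (hk0 : Tendsto k atTop (𝓝 0))
    (hunif' : ∀ T > 0, TendstoUniformlyOn (fun t s => k' (t + s) / k' t)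
      (fun _ => 1) atTop (Icc 0 T)) :
    ∀ᶠ t in atTop, k' t < 0 := by
  have h := (Metric.tendstoUniformlyOn_iff.mp (hunif' 1 one_pos)) (1/2) (by norm_num)
  rw [eventually_atTop] at h
  obtain ⟨t₀, ht₀⟩ := h
  set t₁ := max t₀ 1 with ht₁def
  have ht₁1 : (1:ℝ) ≤ t₁ := le_max_right _ _
  have hprop : ∀ t ≥ t₁, ∀ s ∈ Icc (0:ℝ) 1, |1 - k' (t + s) / k' t| < 1/2 := by
    intro t ht s hs
    have := ht₀ t (le_trans (le_max_left _ _) ht) s hs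
    rwa [Real.dist_eq] at this
  have hne : ∀ t ≥ t₁, k' t ≠ 0 := by
    intro t ht h0
    have := hprop t ht 0 ⟨le_refl 0, zero_le_one⟩
    rw [add_zero, h0] at this
    norm_num at this
  have hsign : ∀ t ≥ t₁, ∀ s ∈ Icc (0:ℝ) 1, (0 < k' (t + s) ↔ 0 < k' t) := by
    intro t ht s hs
    have h1 := hprop t ht s hs
    have hr : 0 < k' (t + s) / k' t := by
      have : |1 - k' (t + s) / k' t| < 1/2 := h1
      have := abs_lt.mp this
      linarith [this.1, this.2]
    rcases div_pos_iff.mp hr with ⟨h2, h3⟩ | ⟨h2, h3⟩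
    · exact ⟨fun _ => h3, fun _ => h2⟩
    · constructor <;> intro hc <;> linarith
  have hnat : ∀ n : ℕ, (0 < k' (t₁ + n) ↔ 0 < k' t₁) := by
    intro n
    induction n with
    | zero => simp
    | succ m ih =>
      have hm : t₁ + m ≥ t₁ := le_add_of_nonneg_right (Nat.cast_nonneg m)
      have := hsign (t₁ + m) hm 1 ⟨zero_le_one, le_refl 1⟩
      push_cast
      rw [show t₁ + (m + 1 : ℝ) = t₁ + m + 1 by ring]
      rw [this]; exact ih
  have hray : ∀ u ≥ t₁, (0 < k' u ↔ 0 < k' t₁) := by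
    intro u hu
    set n := ⌊u - t₁⌋₊ with hn
    have h0 : (0:ℝ) ≤ u - t₁ := by linarith
    have hle : (n:ℝ) ≤ u - t₁ := Nat.floor_le h0
    have hlt : u - t₁ < n + 1 := Nat.lt_floor_add_one _
    have hm : t₁ + n ≥ t₁ := le_add_of_nonneg_right (Nat.cast_nonneg n)
    have heq : u = (t₁ + n) + (u - t₁ - n) := by ring
    rw [heq, hsign (t₁ + n) hm (u - t₁ - n) ⟨by linarith, by linarith⟩]
    exact hnat n
  rcases lt_or_gt_of_ne (hne t₁ le_rfl) with hneg | hpos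
  · filter_upwards [eventually_ge_atTop t₁] with u hu
    have h1 := hray u hu
    have h2 := hne u hu
    rcases lt_trichotomy (k' u) 0 with h | h | h
    · exact h
    · exact absurd h h2
    · exact absurd (h1.mp h) (not_lt.mpr hneg.le)
  · exfalso
    have hkt₁pos : 0 < k t₁ := hkpos t₁ (by linarith)
    have hmono : ∀ u ≥ t₁, k t₁ ≤ k u := by
      intro u hu
      have hδ : ∫ s in t₁..u, k' s = k u - k t₁ := by
        apply integral_eq_sub_of_hasDerivAt
        · exact fun x hx => hkd x (uIcc_subset_Ioi' (by linarith) (by linarith) hx)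
        · exact (hk'c.mono (uIcc_subset_Ioi' (by linarith) (by linarith))).intervalIntegrable
      have hnn : 0 ≤ ∫ s in t₁..u, k' s := by
        apply intervalIntegral.integral_nonneg (by linarith : t₁ ≤ u)
        intro x hx
        exact ((hray x hx.1).mpr hpos).le
      linarith
    have := (hk0.eventually_lt_const hkt₁pos).and (eventually_ge_atTop t₁)
    obtain ⟨u, hu1, hu2⟩ := this.exists
    linarith [hmono u hu2]
section Key
variable {k k' : ℝ → ℝ}

lemma keyG (k k' : ℝ → ℝ) (L : ℝ)
    (hkpos : ∀ t > 0, 0 < k t)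
    (hkd : ∀ t > 0, HasDerivAt k (k' t) t)
    (hk'c : ContinuousOn k' (Ioi 0))
    (hk0 : Tendsto k atTop (𝓝 0))
    (hunif' : ∀ T > 0, TendstoUniformlyOn (fun t s => k' (t + s) / k' t)
      (fun _ => 1) atTop (Icc 0 T))
    (hL : Tendsto (fun t => ∫ s in (1:ℝ)..t, k s * Real.sin s) atTop (𝓝 L)) :
    Tendsto (fun t => ((L - ∫ s in (1:ℝ)..t, k s * Real.sin s) - k t * Real.cos t) / k t)
      atTop (𝓝 0) := by
  rw [NormedAddCommGroup.tendsto_nhds_zero]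
  intro ε hε
  set ε' := min (ε/4) (1/2) with hε'def
  have hε'pos : 0 < ε' := lt_min (by linarith) (by norm_num)
  have hε'half : ε' ≤ 1/2 := min_le_right _ _
  have hε'ε : ε' ≤ ε/4 := min_le_left _ _
  have h1ε' : (1:ℝ)/2 ≤ 1 - ε' := by linarith
  set c := ε' / (1 - ε') with hcdef
  have hc0 : 0 ≤ c := div_nonneg hε'pos.le (by linarith)
  have hcε : c ≤ ε/2 := by
    have h1 : c ≤ ε' / (1/2) :=
      div_le_div_of_nonneg_left hε'pos.le (by norm_num) h1ε'
    have h2 : ε' / (1/2) = 2 * ε' := by ring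
    linarith
  -- uniform bound threshold
  have hu := (Metric.tendstoUniformlyOn_iff.mp (hunif' (2*π) Real.two_pi_pos)) ε' hε'pos
  rw [eventually_atTop] at hu
  obtain ⟨t₀, ht₀⟩ := hu
  have hs := sign_k' k k' hkpos hkd hk'c hk0 hunif'
  rw [eventually_atTop] at hs
  obtain ⟨ts, hts⟩ := hs
  set t₂ := max (max t₀ ts) 1 with ht₂def
  have ht₂1 : (1:ℝ) ≤ t₂ := le_max_right _ _
  have hsgn : ∀ t ≥ t₂, k' t < 0 := fun t ht =>
    hts t (le_trans (le_trans (le_max_right _ _) (le_max_left _ _)) ht)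
  have hdiff : ∀ t ≥ t₂, ∀ s ∈ Icc (0:ℝ) (2*π), |k' (t + s) - k' t| ≤ ε' * (-k' t) := by
    intro t ht s hs
    have hb := ht₀ t (le_trans (le_trans (le_max_left _ _) (le_max_left _ _)) ht) s hs
    rw [Real.dist_eq] at hb
    have hkt : k' t < 0 := hsgn t ht
    have hne : k' t ≠ 0 := hkt.ne
    have heq : k' (t + s) - k' t = (k' (t + s) / k' t - 1) * k' t := by
      field_simp
    rw [heq, abs_mul, abs_of_neg hkt]
    refine mul_le_mul_of_nonneg_right ?_ (by linarith)
    rw [abs_sub_comm] at hb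
    exact hb.le
  -- per-period estimate
  have hper : ∀ a ≥ t₂, |∫ s in a..(a + 2*π), k' s * Real.cos s| ≤ c * (k a - k (a + 2*π)) := by
    intro a ha
    have ha0 : (0:ℝ) < a := lt_of_lt_of_le one_pos (le_trans ht₂1 ha)
    have ha20 : (0:ℝ) < a + 2*π := by linarith [Real.two_pi_pos]
    have hka' : k' a < 0 := hsgn a ha
    have hzero : ∫ s in a..(a + 2*π), Real.cos s = 0 := by
      rw [integral_cos, Real.sin_add_two_pi, sub_self]
    have hrw : ∫ s in a..(a + 2*π), k' s * Real.cos s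
        = ∫ s in a..(a + 2*π), (k' s - k' a) * Real.cos s := by
      have : ∀ s, (k' s - k' a) * Real.cos s = k' s * Real.cos s - k' a * Real.cos s := by
        intro s; ring
      simp_rw [this]
      rw [integral_sub (g := fun s => k' a * Real.cos s) (intk'cos hk'c ha0 ha20)
        ((continuous_const.mul Real.continuous_cos).intervalIntegrable _ _),
        intervalIntegral.integral_const_mul, hzero, mul_zero, sub_zero]
    have hbound : ‖∫ s in a..(a + 2*π), (k' s - k' a) * Real.cos s‖
        ≤ (ε' * (-k' a)) * |(a + 2*π) - a| := by
      apply intervalIntegral.norm_integral_le_of_norm_le_const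
      intro x hx
      rw [uIoc_of_le (by linarith [Real.two_pi_pos])] at hx
      have hx1 : x - a ∈ Icc (0:ℝ) (2*π) := ⟨by linarith [hx.1], by linarith [hx.2]⟩
      have := hdiff a ha (x - a) hx1
      rw [show a + (x - a) = x by ring] at this
      rw [Real.norm_eq_abs, abs_mul]
      have hnn : 0 ≤ ε' * (-k' a) := by nlinarith
      have h2 : |k' x - k' a| * |Real.cos x| ≤ (ε' * (-k' a)) * 1 :=
        mul_le_mul this (Real.abs_cos_le_one x) (abs_nonneg _) hnn
      linarith
    have habs : |(a + 2*π) - a| = 2*π := by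
      rw [show (a + 2*π) - a = 2*π by ring, abs_of_pos Real.two_pi_pos]
    -- lower bound on mass
    have hmass : (2*π) * ((1 - ε') * (-k' a)) ≤ k a - k (a + 2*π) := by
      have hptw : ∀ x ∈ Icc a (a + 2*π), (1 - ε') * (-k' a) ≤ -k' x := by
        intro x hx
        have hx1 : x - a ∈ Icc (0:ℝ) (2*π) := ⟨by linarith [hx.1], by linarith [hx.2]⟩
        have := abs_le.mp (hdiff a ha (x - a) hx1)
        rw [show a + (x - a) = x by ring] at this
        nlinarith [this.1, this.2]
      have hmono := intervalIntegral.integral_mono_on (by linarith [Real.two_pi_pos] : a ≤ a + 2*π)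
        (intervalIntegrable_const (μ := volume))
        (((hk'c.mono (uIcc_subset_Ioi' ha0 ha20)).neg).intervalIntegrable)
        hptw
      rw [intervalIntegral.integral_const] at hmono
      have hftc : ∫ s in a..(a + 2*π), -k' s = k a - k (a + 2*π) := by
        rw [intervalIntegral.integral_neg, ftc_k hkd hk'c ha0 ha20]
        ring
      simp only [Pi.neg_apply] at hmono
      rw [hftc] at hmono
      rw [smul_eq_mul] at hmono
      calc (2*π) * ((1 - ε') * (-k' a)) = ((a + 2*π) - a) * ((1 - ε') * (-k' a)) := by ring
        _ ≤ k a - k (a + 2*π) := hmono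
    have hkey : c * ((2*π) * ((1 - ε') * (-k' a))) = (ε' * (-k' a)) * (2*π) := by
      rw [hcdef]
      field_simp
    rw [Real.norm_eq_abs, habs] at hbound
    calc |∫ s in a..(a + 2*π), k' s * Real.cos s|
        = |∫ s in a..(a + 2*π), (k' s - k' a) * Real.cos s| := by rw [hrw]
      _ ≤ (ε' * (-k' a)) * (2*π) := hbound
      _ = c * ((2*π) * ((1 - ε') * (-k' a))) := hkey.symm
      _ ≤ c * (k a - k (a + 2*π)) := mul_le_mul_of_nonneg_left hmass hc0
  -- telescoping
  have hind : ∀ t ≥ t₂, ∀ N : ℕ,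
      |∫ s in t..(t + 2*π*N), k' s * Real.cos s| ≤ c * (k t - k (t + 2*π*N)) := by
    intro t ht N
    induction N with
    | zero => simp
    | succ m ih =>
      have ht0 : (0:ℝ) < t := lt_of_lt_of_le one_pos (le_trans ht₂1 ht)
      have hm0 : (0:ℝ) ≤ 2*π*m := by positivity
      set a := t + 2*π*m with hadef
      have ha0 : (0:ℝ) < a := by linarith
      have ha2 : a ≥ t₂ := by linarith [le_trans ht₂1 ht, ht]
      have hcast : t + 2*π*((m:ℕ)+1 : ℕ) = a + 2*π := by push_cast; ring
      have ha20 : (0:ℝ) < a + 2*π := by linarith [Real.two_pi_pos]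
      have hadj : (∫ s in t..a, k' s * Real.cos s) + ∫ s in a..(a + 2*π), k' s * Real.cos s
          = ∫ s in t..(a + 2*π), k' s * Real.cos s :=
        integral_add_adjacent_intervals (intk'cos hk'c ht0 ha0) (intk'cos hk'c ha0 ha20)
      rw [hcast, ← hadj]
      calc |(∫ s in t..a, k' s * Real.cos s) + ∫ s in a..(a + 2*π), k' s * Real.cos s|
          ≤ |∫ s in t..a, k' s * Real.cos s| + |∫ s in a..(a + 2*π), k' s * Real.cos s| :=
            abs_add_le _ _
        _ ≤ c * (k t - k a) + c * (k a - k (a + 2*π)) := add_le_add ih (hper a ha2)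
        _ = c * (k t - k (a + 2*π)) := by ring
  -- bound on G
  have hGbound : ∀ t ≥ t₂, |(L - ∫ s in (1:ℝ)..t, k s * Real.sin s) - k t * Real.cos t|
      ≤ c * k t := by
    intro t ht
    have ht1 : (1:ℝ) ≤ t := le_trans ht₂1 ht
    have hφ : Tendsto (fun N : ℕ => t + 2*π*N) atTop atTop :=
      tendsto_atTop_add_const_left _ t
        (Tendsto.const_mul_atTop Real.two_pi_pos tendsto_natCast_atTop_atTop)
    have hlim := (tail_limit hkd hk'c hk0 hL ht1).comp hφ
    have hlimabs := hlim.abs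
    apply le_of_tendsto hlimabs
    filter_upwards with N
    have h1 := hind t ht N
    have h2 : 0 < k (t + 2*π*N) := hkpos _ (by positivity)
    calc |∫ s in t..(t + 2*π*N), k' s * Real.cos s| ≤ c * (k t - k (t + 2*π*N)) := h1
      _ ≤ c * k t := mul_le_mul_of_nonneg_left (by linarith) hc0
  -- conclude
  filter_upwards [eventually_ge_atTop t₂] with t ht
  have ht1 : (1:ℝ) ≤ t := le_trans ht₂1 ht
  have hkt : 0 < k t := hkpos t (by linarith)
  rw [Real.norm_eq_abs, abs_div, abs_of_pos hkt, div_lt_iff₀ hkt]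
  calc |(L - ∫ s in (1:ℝ)..t, k s * Real.sin s) - k t * Real.cos t|
      ≤ c * k t := hGbound t ht
    _ ≤ (ε/2) * k t := mul_le_mul_of_nonneg_right hcε hkt.le
    _ < ε * k t := by nlinarith

end Key


/-- Under the hypotheses of the previous lemma, with
`k₀(t) = k(t) sin(t)` and `∫_1^t k₀ → L`, one has
`(∫_t^∞ k₀)/k(t) − cos(t) → 0`; in particular the limsup of `|∫_t^∞ k₀|/k(t)` is `1`
and the liminf is `0`. -/
theorem stmt13 (k k' : ℝ → ℝ) (L : ℝ)
    (hkpos : ∀ t > 0, 0 < k t)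
    (hkd : ∀ t > 0, HasDerivAt k (k' t) t)
    (hk'c : ContinuousOn k' (Ioi 0))
    (hnonint : Tendsto (fun t => ∫ s in (1:ℝ)..t, k s) atTop atTop)
    (hk0 : Tendsto k atTop (𝓝 0))
    (hunif : ∀ T > 0, TendstoUniformlyOn (fun t s => k (t + s) / k t)
      (fun _ => 1) atTop (Icc 0 T))
    (hunif' : ∀ T > 0, TendstoUniformlyOn (fun t s => k' (t + s) / k' t)
      (fun _ => 1) atTop (Icc 0 T))
    (hL : Tendsto (fun t => ∫ s in (1:ℝ)..t, k s * Real.sin s) atTop (𝓝 L)) :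
    Tendsto (fun t => (L - ∫ s in (1:ℝ)..t, k s * Real.sin s) / k t - Real.cos t)
      atTop (𝓝 0) ∧
    limsup (fun t => |L - ∫ s in (1:ℝ)..t, k s * Real.sin s| / k t) atTop = 1 ∧
    liminf (fun t => |L - ∫ s in (1:ℝ)..t, k s * Real.sin s| / k t) atTop = 0 := by
  
  have hG := keyG k k' L hkpos hkd hk'c hk0 hunif' hL
  set F := fun t => L - ∫ s in (1:ℝ)..t, k s * Real.sin s with hF
  set u := fun t => |F t| / k t with hu
  -- Part 1
  have h1 : Tendsto (fun t => F t / k t - Real.cos t) atTop (𝓝 0) := by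
    apply hG.congr'
    filter_upwards [eventually_ge_atTop (1:ℝ)] with t ht
    have hkt : k t ≠ 0 := (hkpos t (by linarith)).ne'
    field_simp
    rfl
  -- closeness of u to |cos|
  have hu_cos : ∀ ε > 0, ∀ᶠ t in atTop, abs (u t - |Real.cos t|) ≤ ε := by
    intro ε hε
    have h2 := (NormedAddCommGroup.tendsto_nhds_zero.mp h1) ε hε
    filter_upwards [h2, eventually_ge_atTop (1:ℝ)] with t hlt ht
    have hkt : 0 < k t := hkpos t (by linarith)
    have he : u t = |F t / k t| := by rw [hu]; simp only; rw [abs_div, abs_of_pos hkt]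
    rw [Real.norm_eq_abs] at hlt
    calc abs (u t - |Real.cos t|) = abs (|F t / k t| - |Real.cos t|) := by rw [he]
      _ ≤ |F t / k t - Real.cos t| := abs_abs_sub_abs_le_abs_sub _ _
      _ ≤ ε := hlt.le
  have hub : ∀ᶠ t in atTop, u t ≤ 2 := by
    filter_upwards [hu_cos 1 one_pos] with t h
    have h' := abs_le.mp h
    have hc := Real.abs_cos_le_one t
    linarith [h'.2]
  have hlb : ∀ᶠ t in atTop, 0 ≤ u t := by
    filter_upwards [eventually_ge_atTop (1:ℝ)] with t ht
    exact div_nonneg (abs_nonneg _) (hkpos t (by linarith)).le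
  have hbdd_le : IsBoundedUnder (· ≤ ·) atTop u := isBoundedUnder_of_eventually_le hub
  have hbdd_ge : IsBoundedUnder (· ≥ ·) atTop u := isBoundedUnder_of_eventually_ge hlb
  have hcob_le : IsCoboundedUnder (· ≤ ·) atTop u := hbdd_ge.isCoboundedUnder_le
  have hcob_ge : IsCoboundedUnder (· ≥ ·) atTop u := hbdd_le.isCoboundedUnder_ge
  have hseq1 : Tendsto (fun n : ℕ => (n:ℝ) * (2*π)) atTop atTop :=
    tendsto_natCast_atTop_atTop.atTop_mul_const Real.two_pi_pos
  have hseq2 : Tendsto (fun n : ℕ => π/2 + (n:ℝ) * (2*π)) atTop atTop :=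
    tendsto_atTop_add_const_left _ _ hseq1
  -- limsup = 1
  have hup : ∀ ε > 0, limsup u atTop ≤ 1 + ε := by
    intro ε hε
    apply limsup_le_of_le hcob_le
    filter_upwards [hu_cos ε hε] with t h
    have h' := abs_le.mp h
    have hc := Real.abs_cos_le_one t
    linarith [h'.2]
  have hdown : ∀ ε > 0, 1 - ε ≤ limsup u atTop := by
    intro ε hε
    apply le_limsup_of_frequently_le _ hbdd_le
    apply hseq1.frequently
    apply Eventually.frequently
    apply (hseq1.eventually (hu_cos ε hε)).mono
    intro n hn
    rw [Real.cos_nat_mul_two_pi] at hn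
    have := abs_le.mp hn
    simp only [abs_one] at this
    linarith [this.1]
  have hlimsup : limsup u atTop = 1 := by
    apply le_antisymm
    · by_contra h
      push_neg at h
      have h2 := hup ((limsup u atTop - 1)/2) (by linarith)
      linarith
    · by_contra h
      push_neg at h
      have h2 := hdown ((1 - limsup u atTop)/2) (by linarith)
      linarith
  -- liminf = 0
  have hlf1 : 0 ≤ liminf u atTop := le_liminf_of_le hcob_ge hlb
  have hlf2 : ∀ ε > 0, liminf u atTop ≤ ε := by
    intro ε hε
    apply liminf_le_of_frequently_le _ hbdd_ge
    apply hseq2.frequently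
    apply Eventually.frequently
    apply (hseq2.eventually (hu_cos ε hε)).mono
    intro n hn
    rw [Real.cos_add_nat_mul_two_pi, Real.cos_pi_div_two] at hn
    have := abs_le.mp hn
    simp only [abs_zero] at this
    linarith [this.2]
  have hliminf : liminf u atTop = 0 := by
    apply le_antisymm _ hlf1
    by_contra h
    push_neg at h
    have h2 := hlf2 (liminf u atTop / 2) (by linarith)
    linarith
  exact ⟨h1, hlimsup, hliminf⟩
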